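/- Define H₁, H₂ : ℝ⁴ → ℝ on coordinates (q₁, q₂, p₁, p₂) by H₁ = 2p₁p₂ + q₁p₂² + q₁³ - 2q₁q₂ and H₂ = p₁² + 2q₁p₁p₂ + (q₁² - q₂)p₂² + q₁²q₂ - q₂². Then their canonical Poisson bracket vanishes identically: for all points of ℝ⁴, ∑_{i=1}^{2} (∂H₁/∂q_i · ∂H₂/∂p_i - ∂H₁/∂p_i · ∂H₂/∂q_i) = 0. -/

import Mathlib

/-- The Stäckel Hamiltonian `H₁ = 2p₁p₂ + q₁p₂² + q₁³ - 2q₁q₂` (n = 2),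
as a function of the canonical coordinates `(q₁, q₂, p₁, p₂)`. -/
def H₁n2 (q₁ q₂ p₁ p₂ : ℝ) : ℝ := 2 * p₁ * p₂ + q₁ * p₂ ^ 2 + q₁ ^ 3 - 2 * q₁ * q₂

/-- The Stäckel Hamiltonian `H₂ = p₁² + 2q₁p₁p₂ + (q₁² - q₂)p₂² + q₁²q₂ - q₂²` (n = 2). -/
def H₂n2 (q₁ q₂ p₁ p₂ : ℝ) : ℝ :=
  p₁ ^ 2 + 2 * q₁ * p₁ * p₂ + (q₁ ^ 2 - q₂) * p₂ ^ 2 + q₁ ^ 2 * q₂ - q₂ ^ 2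

/-- The canonical Poisson bracket of the two Stäckel Hamiltonians for n = 2
vanishes identically on `ℝ⁴`. -/
theorem poisson_bracket_n2 (q₁ q₂ p₁ p₂ : ℝ) :
    deriv (fun x => H₁n2 x q₂ p₁ p₂) q₁ * deriv (fun x => H₂n2 q₁ q₂ x p₂) p₁
      - deriv (fun x => H₁n2 q₁ q₂ x p₂) p₁ * deriv (fun x => H₂n2 x q₂ p₁ p₂) q₁
      + deriv (fun x => H₁n2 q₁ x p₁ p₂) q₂ * deriv (fun x => H₂n2 q₁ q₂ p₁ x) p₂
      - deriv (fun x => H₁n2 q₁ q₂ p₁ x) p₂ * deriv (fun x => H₂n2 q₁ x p₁ p₂) q₂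
      = 0 := by
  have key : deriv (fun x => H₂n2 q₁ x p₁ p₂) q₂ = q₁ ^ 2 - p₂ ^ 2 - 2 * q₂ := by
    have h : HasDerivAt (fun x : ℝ => p₁ ^ 2 + 2 * q₁ * p₁ * p₂ + (q₁ ^ 2 - x) * p₂ ^ 2
        + q₁ ^ 2 * x - x ^ 2) (q₁ ^ 2 - p₂ ^ 2 - 2 * q₂) q₂ := by
      have h1 := (((hasDerivAt_id q₂).const_sub (q₁ ^ 2)).mul_const (p₂ ^ 2)).const_add
        (p₁ ^ 2 + 2 * q₁ * p₁ * p₂)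
      have h2 := (hasDerivAt_id q₂).const_mul (q₁ ^ 2)
      have h3 := hasDerivAt_pow 2 q₂
      refine ((h1.fun_add h2).fun_sub h3).congr_deriv ?_
      ring
    simpa [H₂n2] using h.deriv
  rw [key]
  simp only [H₁n2, H₂n2]
  simp (disch := fun_prop) only [deriv_fun_add, deriv_fun_sub, deriv_fun_mul, deriv_fun_pow, deriv_const_mul_field,
    deriv_mul_const_field, deriv_const, deriv_id'', deriv_pow_field]
  norm_num
  ring
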